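/- Every nonempty compact, metrizable, totally disconnected topological space is a retract of the Cantor set, i.e., there exist continuous maps σ : X → 2^ℕ and ρ : 2^ℕ → X with ρ ∘ σ = id_X. -/

import Mathlib

open Classical in
noncomputable def cantorRet (A : Set (ℕ → Bool)) (x : ℕ → Bool) : ℕ → Bool
  | n =>
    if ∃ a ∈ A, (∀ i, (h : i < n) → a i = cantorRet A x i) ∧ a n = x n
    then x n else !(x n)

open Classical in
theorem cantorRet_def (A : Set (ℕ → Bool)) (x : ℕ → Bool) (n : ℕ) :
    cantorRet A x n =
      if ∃ a ∈ A, (∀ i, i < n → a i = cantorRet A x i) ∧ a n = x n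
      then x n else !(x n) := by
  rw [cantorRet]

theorem cantorRet_prefix (A : Set (ℕ → Bool)) (hA : A.Nonempty) (x : ℕ → Bool) (n : ℕ) :
    ∃ a ∈ A, ∀ i, i < n → a i = cantorRet A x i := by
  induction n with
  | zero => exact ⟨hA.choose, hA.choose_spec, by omega⟩
  | succ n ih =>
    obtain ⟨a, haA, ha⟩ := ih
    by_cases h : ∃ a ∈ A, (∀ i, i < n → a i = cantorRet A x i) ∧ a n = x n
    · obtain ⟨b, hbA, hb, hbn⟩ := h
      refine ⟨b, hbA, fun i hi => ?_⟩
      rcases Nat.lt_succ_iff_lt_or_eq.mp hi with hi | rfl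
      · exact hb i hi
      · rw [cantorRet_def, if_pos ⟨b, hbA, hb, hbn⟩, hbn]
    · refine ⟨a, haA, fun i hi => ?_⟩
      rcases Nat.lt_succ_iff_lt_or_eq.mp hi with hi | rfl
      · exact ha i hi
      · rw [cantorRet_def, if_neg h]
        exact Bool.eq_not_iff.mpr fun hc => h ⟨a, haA, ha, hc⟩

theorem cantorRet_mem (A : Set (ℕ → Bool)) (hA : A.Nonempty) (hAc : IsClosed A)
    (x : ℕ → Bool) : cantorRet A x ∈ A := by
  choose a haA ha using cantorRet_prefix A hA x
  have : Filter.Tendsto a Filter.atTop (nhds (cantorRet A x)) := by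
    rw [tendsto_pi_nhds]
    intro i
    refine Filter.Tendsto.congr' ?_ tendsto_const_nhds
    filter_upwards [Filter.eventually_ge_atTop (i + 1)] with n hn
    exact (ha n i (by omega)).symm
  exact hAc.mem_of_tendsto this (Filter.Eventually.of_forall haA)

theorem cantorRet_eq_self (A : Set (ℕ → Bool)) {x : ℕ → Bool} (hx : x ∈ A) :
    cantorRet A x = x := by
  funext n
  induction n using Nat.strong_induction_on with
  | _ n ih =>
    rw [cantorRet_def, if_pos ⟨x, hx, fun i hi => (ih i hi).symm, rfl⟩]

theorem cantorRet_congr (A : Set (ℕ → Bool)) (x y : ℕ → Bool) :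
    ∀ n, (∀ i, i ≤ n → x i = y i) → cantorRet A x n = cantorRet A y n := by
  intro n
  induction n using Nat.strong_induction_on with
  | _ n ih =>
    intro hxy
    have hr : ∀ i, i < n → cantorRet A x i = cantorRet A y i :=
      fun i hi => ih i hi fun j hj => hxy j (hj.trans hi.le)
    have hcond : (∃ a ∈ A, (∀ i, i < n → a i = cantorRet A x i) ∧ a n = y n) ↔
        (∃ a ∈ A, (∀ i, i < n → a i = cantorRet A y i) ∧ a n = y n) := by
      constructor
      · rintro ⟨a, h1, h2, h3⟩
        exact ⟨a, h1, fun i hi => (h2 i hi).trans (hr i hi), h3⟩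
      · rintro ⟨a, h1, h2, h3⟩
        exact ⟨a, h1, fun i hi => (h2 i hi).trans (hr i hi).symm, h3⟩
    classical
    rw [cantorRet_def, cantorRet_def, hxy n le_rfl, if_congr hcond rfl rfl]

theorem cantorRet_continuous (A : Set (ℕ → Bool)) : Continuous (cantorRet A) := by
  refine continuous_pi fun n => ?_
  have key : (fun x => cantorRet A x n) =
      (fun v : Fin (n + 1) → Bool =>
        cantorRet A (fun i => if h : i < n + 1 then v ⟨i, h⟩ else false) n) ∘
      (fun x (i : Fin (n + 1)) => x (i : ℕ)) := by
    funext x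
    exact cantorRet_congr A x _ n fun i hi => by simp [Nat.lt_succ_of_le hi]
  rw [key]
  exact continuous_of_discreteTopology.comp (continuous_pi fun i => continuous_apply _)

theorem stmt_14 (X : Type*) [TopologicalSpace X] [Nonempty X] [CompactSpace X]
    [TopologicalSpace.MetrizableSpace X] [TotallyDisconnectedSpace X] :
    ∃ (σ : X → (ℕ → Bool)) (ρ : (ℕ → Bool) → X),
      Continuous σ ∧ Continuous ρ ∧ ρ ∘ σ = id := by
  classical
  letI := TopologicalSpace.metrizableSpaceMetric X
  haveI : TotallySeparatedSpace X := loc_compact_t2_tot_disc_iff_tot_sep.mp ‹_›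
  have hB := TopologicalSpace.isBasis_countableBasis X
  -- the set of clopen subsets of X is countable
  set S : Set (Set X) := {K | IsClopen K} with hS
  have hchoice : ∀ K ∈ S, ∃ F : Set (Set X),
      (F.Finite ∧ F ⊆ TopologicalSpace.countableBasis X) ∧ ⋃₀ F = K := by
    intro K hK
    obtain ⟨S', hS'B, hKeq⟩ := hB.open_eq_sUnion hK.2
    have hKc : IsCompact K := hK.1.isCompact
    obtain ⟨t, ht⟩ := hKc.elim_finite_subcover (fun s : S' => (s : Set X))
      (fun s => hB.isOpen (hS'B s.2))
      (by rw [hKeq]; exact fun x ⟨u, hu, hxu⟩ => Set.mem_iUnion.mpr ⟨⟨u, hu⟩, hxu⟩)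
    refine ⟨(fun s : S' => (s : Set X)) '' t, ⟨t.finite_toSet.image _, ?_⟩, ?_⟩
    · rintro _ ⟨s, -, rfl⟩; exact hS'B s.2
    · apply subset_antisymm
      · rintro x ⟨u, ⟨s, hst, rfl⟩, hxu⟩
        rw [hKeq]; exact ⟨s, s.2, hxu⟩
      · intro x hx
        obtain ⟨s, hst, hxs⟩ := Set.mem_iUnion₂.mp (ht hx)
        exact ⟨s, ⟨s, hst, rfl⟩, hxs⟩
  choose F hF hFU using hchoice
  have hScount : S.Countable := by
    refine Set.MapsTo.countable_of_injOn (f := fun K => if h : K ∈ S then F K h else ∅)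
      (t := {F : Set (Set X) | F.Finite ∧ F ⊆ TopologicalSpace.countableBasis X}) ?_ ?_
      (Set.countable_setOf_finite_subset (TopologicalSpace.countable_countableBasis X))
    · intro K hK; simp only [dif_pos hK]; exact hF K hK
    · intro K hK K' hK' heq
      simp only [dif_pos hK, dif_pos hK'] at heq
      rw [← hFU K hK, ← hFU K' hK', heq]
  have hSne : S.Nonempty := ⟨∅, isClopen_empty⟩
  obtain ⟨g, hg⟩ := hScount.exists_eq_range hSne
  have hgclopen : ∀ n, IsClopen (g n) := fun n => by
    have : g n ∈ S := hg ▸ Set.mem_range_self n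
    exact this
  -- the embedding
  set σ : X → ℕ → Bool := fun x n => (g n).boolIndicator x with hσ
  have hσcont : Continuous σ :=
    continuous_pi fun n => (continuous_boolIndicator_iff_isClopen _).mpr (hgclopen n)
  have hσinj : Function.Injective σ := by
    intro x y hxy
    by_contra hne
    obtain ⟨K, hK, hxK, hyK⟩ := exists_isClopen_of_totally_separated hne
    have : K ∈ S := hK
    rw [hg] at this
    obtain ⟨n, rfl⟩ := this
    have h1 : σ x n = true := ((g n).mem_iff_boolIndicator x).mp hxK
    have h2 : σ y n = false := ((g n).notMem_iff_boolIndicator y).mp hyK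
    rw [hxy] at h1
    rw [h1] at h2
    exact Bool.noConfusion h2
  have hemb := hσcont.isClosedEmbedding hσinj
  set A : Set (ℕ → Bool) := Set.range σ with hA
  have hAne : A.Nonempty := Set.range_nonempty σ
  have hAc : IsClosed A := hemb.isClosed_range
  let h : X ≃ₜ A := hemb.toIsEmbedding.toHomeomorph
  refine ⟨σ, fun c => h.symm ⟨cantorRet A c, cantorRet_mem A hAne hAc c⟩, hσcont,
    h.symm.continuous.comp (Continuous.subtype_mk (cantorRet_continuous A) _), ?_⟩
  funext x
  have hval : (⟨cantorRet A (σ x), cantorRet_mem A hAne hAc (σ x)⟩ : A) = h x := by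
    apply Subtype.ext
    show cantorRet A (σ x) = ((h x : A) : ℕ → Bool)
    rw [cantorRet_eq_self A (Set.mem_range_self x)]
    rfl
  simp only [Function.comp_apply, hval, Homeomorph.symm_apply_apply, id_eq]
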